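/- Let f : ℕ → ℕ be a computable block function such that the cardinality-of-preimage function cp_f(x) = |f⁻¹(x)| is computable. Then for every x one can compute the f-block containing x: there is a computable function mapping x to (a canonical code of) the finite f-closed interval I that is the f-block containing x. -/

import Mathlib

/-- `I` is an interval of `(ℕ, <)`. -/
def IsNatInterval (I : Set ℕ) : Prop :=
  ∀ ⦃a b c : ℕ⦄, a ∈ I → c ∈ I → a ≤ b → b ≤ c → b ∈ I

/-- `I` is `f`-closed: for all `x ∈ I`, `f x ∈ I` and `f ⁻¹ x ⊆ I`. -/
def FClosed (f : ℕ → ℕ) (I : Set ℕ) : Prop :=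
  ∀ x ∈ I, f x ∈ I ∧ ∀ y : ℕ, f y = x → y ∈ I

/-- A finite nonempty interval `I` is an `f`-block if it is `f`-closed, it cannot be
written as a disjoint union of several nonempty `f`-closed intervals, and the set of
elements below `I` is `f`-closed. -/
def IsFBlock (f : ℕ → ℕ) (I : Finset ℕ) : Prop :=
  I.Nonempty ∧ IsNatInterval ↑I ∧ FClosed f ↑I ∧
    (¬ ∃ J K : Set ℕ, J.Nonempty ∧ K.Nonempty ∧ IsNatInterval J ∧ IsNatInterval K ∧
        FClosed f J ∧ FClosed f K ∧ Disjoint J K ∧ J ∪ K = ↑I) ∧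
    FClosed f {x : ℕ | ∀ y ∈ I, x < y}

/-- `f` is a block function if every natural number lies in some `f`-block. -/
def BlockFunction (f : ℕ → ℕ) : Prop :=
  ∀ a : ℕ, ∃ I : Finset ℕ, a ∈ I ∧ IsFBlock f I

namespace Stmt15Aux

/-- count occurrences of `y` in `L` via foldr -/
def cnt (L : List ℕ) (y : ℕ) : ℕ :=
  L.foldr (fun z acc => if z = y then acc + 1 else acc) 0

lemma cnt_nil (y : ℕ) : cnt [] y = 0 := rfl

lemma cnt_cons (z : ℕ) (L : List ℕ) (y : ℕ) :
    cnt (z :: L) y = if z = y then cnt L y + 1 else cnt L y := rfl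

lemma cnt_append_singleton (L : List ℕ) (a y : ℕ) :
    cnt (L ++ [a]) y = if a = y then cnt L y + 1 else cnt L y := by
  induction L with
  | nil => simp [cnt]
  | cons z L ih =>
      simp only [List.cons_append, cnt_cons, ih]
      split <;> split <;> rfl

lemma cnt_map_range (f : ℕ → ℕ) (c y : ℕ) :
    cnt ((List.range c).map f) y = ((Finset.range c).filter (fun z => f z = y)).card := by
  induction c with
  | zero => simp [cnt]
  | succ c ih =>
      rw [List.range_succ, List.map_append]
      simp only [List.map_cons, List.map_nil, cnt_append_singleton, ih, Finset.range_add_one,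
        Finset.filter_insert]
      split
      · rw [Finset.card_insert_of_notMem (by simp)]
      · rfl

lemma getD_map_range (f : ℕ → ℕ) {c y : ℕ} (h : y < c) :
    (((List.range c).map f).getD y 0) = f y := by
  have hy : y < ((List.range c).map f).length := by simpa using h
  rw [List.getD_eq_getElem _ _ hy]
  simp

/-- the concrete (primitive recursive) checker -/
def G : ℕ × List ℕ × List ℕ → Bool := fun p =>
  ((List.range p.1).map fun y =>
      decide (p.2.1.getD y 0 < p.1) && decide (cnt p.2.1 y = p.2.2.getD y 0)).foldr
    (· && ·) true

lemma foldr_and_eq_true (l : List ℕ) (p : ℕ → Bool) :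
    ((l.map p).foldr (· && ·) true = true) ↔ ∀ y ∈ l, p y = true := by
  induction l with
  | nil => simp
  | cons z L ih => simp [ih]

/-- boolean cut-detector -/
def cutb (f cp : ℕ → ℕ) (c : ℕ) : Bool :=
  G (c, (List.range c).map f, (List.range c).map cp)

/-- `c` is a cut: `[0, c)` is `f`-closed. -/
def Cut (f : ℕ → ℕ) (c : ℕ) : Prop :=
  ∀ y < c, f y < c ∧ ∀ z : ℕ, f z = y → z < c

lemma cut_zero (f : ℕ → ℕ) : Cut f 0 := fun y hy => absurd hy (Nat.not_lt_zero y)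

lemma cut_iff_fclosed (f : ℕ → ℕ) (c : ℕ) : Cut f c ↔ FClosed f (Set.Iio c) := by
  constructor
  · intro h x hx
    exact ⟨(h x hx).1, fun y hy => (h x hx).2 y hy⟩
  · intro h y hy
    exact ⟨(h y hy).1, fun z hz => (h y hy).2 z hz⟩

lemma fclosed_union {f : ℕ → ℕ} {J K : Set ℕ} (hJ : FClosed f J) (hK : FClosed f K) :
    FClosed f (J ∪ K) := by
  rintro x (hx | hx)
  · exact ⟨Or.inl (hJ x hx).1, fun y hy => Or.inl ((hJ x hx).2 y hy)⟩
  · exact ⟨Or.inr (hK x hx).1, fun y hy => Or.inr ((hK x hx).2 y hy)⟩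

lemma card_filter_eq_iff {f : ℕ → ℕ} {y c : ℕ} (hfin : (f ⁻¹' {y} : Set ℕ).Finite) :
    ((Finset.range c).filter (fun z => f z = y)).card = Nat.card (f ⁻¹' {y} : Set ℕ) ↔
      ∀ z : ℕ, f z = y → z < c := by
  have hcard : Nat.card (f ⁻¹' {y} : Set ℕ) = hfin.toFinset.card :=
    Nat.card_eq_card_finite_toFinset hfin
  have hsub : (Finset.range c).filter (fun z => f z = y) ⊆ hfin.toFinset := by
    intro z hz
    simp only [Finset.mem_filter, Finset.mem_range] at hz
    simp [Set.Finite.mem_toFinset, Set.mem_preimage, hz.2]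
  constructor
  · intro h z hz
    have heq : (Finset.range c).filter (fun z => f z = y) = hfin.toFinset :=
      Finset.eq_of_subset_of_card_le hsub (by rw [h, hcard])
    have : z ∈ (Finset.range c).filter (fun z => f z = y) := by
      rw [heq]; simp [Set.Finite.mem_toFinset, Set.mem_preimage, hz]
    simpa using (Finset.mem_filter.mp this).1
  · intro h
    rw [hcard]
    congr 1
    apply Finset.Subset.antisymm hsub
    intro z hz
    simp only [Set.Finite.mem_toFinset, Set.mem_preimage, Set.mem_singleton_iff] at hz
    simp [Finset.mem_filter, Finset.mem_range, h z hz, hz]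

lemma cutb_iff {f : ℕ → ℕ} (hfin : ∀ y, (f ⁻¹' {y} : Set ℕ).Finite) (c : ℕ) :
    cutb f (fun x => Nat.card (f ⁻¹' {x} : Set ℕ)) c = true ↔ Cut f c := by
  rw [cutb, G, foldr_and_eq_true]
  constructor
  · intro h y hy
    have := h y (List.mem_range.mpr hy)
    rw [Bool.and_eq_true, decide_eq_true_iff, decide_eq_true_iff,
      getD_map_range f hy, getD_map_range _ hy, cnt_map_range] at this
    exact ⟨this.1, (card_filter_eq_iff (hfin y)).mp this.2⟩
  · intro h y hy
    rw [List.mem_range] at hy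
    rw [Bool.and_eq_true, decide_eq_true_iff, decide_eq_true_iff,
      getD_map_range f hy, getD_map_range _ hy, cnt_map_range]
    exact ⟨(h y hy).1, (card_filter_eq_iff (hfin y)).mpr (h y hy).2⟩

lemma hfin_of_blockFunction {f : ℕ → ℕ} (hbf : BlockFunction f) (y : ℕ) :
    (f ⁻¹' {y} : Set ℕ).Finite := by
  obtain ⟨I, hyI, _, _, hcl, _⟩ := hbf y
  apply Set.Finite.subset I.finite_toSet
  intro z hz
  exact (hcl y hyI).2 z hz

lemma exists_cut_above {f : ℕ → ℕ} (hbf : BlockFunction f) (x : ℕ) :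
    ∃ c, x < c ∧ Cut f c := by
  obtain ⟨I, hxI, hne, hint, hcl, _, hbelow⟩ := hbf x
  set M := I.max' hne with hM
  refine ⟨M + 1, Nat.lt_succ_of_le (I.le_max' x hxI), ?_⟩
  rw [cut_iff_fclosed]
  have hset : Set.Iio (M + 1) = {z : ℕ | ∀ y ∈ I, z < y} ∪ ↑I := by
    ext z
    simp only [Set.mem_Iio, Set.mem_union, Set.mem_setOf_eq, Finset.mem_coe]
    constructor
    · intro hz
      by_cases hcase : ∃ y ∈ I, y ≤ z
      · obtain ⟨y, hyI, hyz⟩ := hcase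
        exact Or.inr (hint hyI (I.max'_mem hne) hyz (Nat.lt_succ_iff.mp hz))
      · push_neg at hcase
        exact Or.inl hcase
    · rintro (hz | hz)
      · exact lt_of_lt_of_le (hz M (I.max'_mem hne)) (Nat.le_succ M)
      · exact Nat.lt_succ_of_le (I.le_max' z hz)
  rw [hset]
  exact fclosed_union hbelow hcl

lemma isFBlock_Ico {f : ℕ → ℕ} {a b : ℕ} (hab : a < b) (ha : Cut f a) (hb : Cut f b)
    (hno : ∀ c, a < c → c < b → ¬ Cut f c) : IsFBlock f (Finset.Ico a b) := by
  have hcoe : (↑(Finset.Ico a b) : Set ℕ) = Set.Ico a b := Finset.coe_Ico a b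
  have hclosed : FClosed f (Set.Ico a b) := by
    intro x hx
    obtain ⟨hax, hxb⟩ := hx
    have hfx_lt : f x < b := (hb x hxb).1
    have hfx_ge : a ≤ f x := by
      by_contra h
      push_neg at h
      have := (ha (f x) h).2 x rfl
      omega
    refine ⟨⟨hfx_ge, hfx_lt⟩, ?_⟩
    intro z hz
    have hzb : z < b := (hb x hxb).2 z hz
    have hza : a ≤ z := by
      by_contra h
      push_neg at h
      have := (ha z h).1
      omega
    exact ⟨hza, hzb⟩
  refine ⟨⟨a, Finset.mem_Ico.mpr ⟨le_refl a, hab⟩⟩, ?_, ?_, ?_, ?_⟩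
  · intro u v w hu hw huv hvw
    rw [Finset.mem_coe, Finset.mem_Ico] at *
    omega
  · rw [hcoe]; exact hclosed
  · rintro ⟨J, K, hJne, hKne, hJint, hKint, hJcl, hKcl, hdisj, hunion⟩
    rw [hcoe] at hunion
    -- WLOG every element of one part is below every element of the other
    have key : ∀ (P Q : Set ℕ), P.Nonempty → Q.Nonempty → IsNatInterval P →
        FClosed f P → P ∪ Q = Set.Ico a b → (∀ p ∈ P, ∀ q ∈ Q, p < q) → False := by
      intro P Q hPne hQne hPint hPcl hun horder
      set c := sInf Q with hc
      have hcQ : c ∈ Q := Nat.sInf_mem hQne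
      have hcIco : c ∈ Set.Ico a b := by rw [← hun]; exact Or.inr hcQ
      obtain ⟨p0, hp0⟩ := hPne
      have hp0Ico : p0 ∈ Set.Ico a b := by rw [← hun]; exact Or.inl hp0
      have hac : a < c := lt_of_le_of_lt hp0Ico.1 (horder p0 hp0 c hcQ)
      have hcb : c < b := hcIco.2
      have hset : Set.Iio c = Set.Iio a ∪ P := by
        ext z
        simp only [Set.mem_Iio, Set.mem_union]
        constructor
        · intro hz
          by_cases hza : z < a
          · exact Or.inl hza
          · push_neg at hza
            have hzI : z ∈ Set.Ico a b := ⟨hza, lt_trans hz hcb⟩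
            rw [← hun] at hzI
            rcases hzI with hzP | hzQ
            · exact Or.inr hzP
            · exact absurd (Nat.sInf_le hzQ) (by omega)
        · rintro (hz | hz)
          · omega
          · exact horder z hz c hcQ
      have : Cut f c := by
        rw [cut_iff_fclosed, hset]
        exact fclosed_union ((cut_iff_fclosed f a).mp ha) hPcl
      exact hno c hac hcb this
    obtain ⟨j0, hj0⟩ := hJne
    obtain ⟨k0, hk0⟩ := hKne
    have hjk : j0 ≠ k0 := by
      intro h
      exact Set.disjoint_left.mp hdisj hj0 (h ▸ hk0)
    -- show one side is entirely below the other
    rcases lt_or_gt_of_ne hjk with h | h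
    · refine key J K ⟨j0, hj0⟩ ⟨k0, hk0⟩ hJint hJcl hunion ?_
      intro p hp q hq
      by_contra hpq
      push_neg at hpq
      rcases lt_or_ge p k0 with h2 | h2
      · exact Set.disjoint_left.mp hdisj hp (hKint hq hk0 hpq h2.le)
      · exact Set.disjoint_left.mp hdisj (hJint hj0 hp (le_of_lt h) h2) hk0
    · refine key K J ⟨k0, hk0⟩ ⟨j0, hj0⟩ hKint hKcl ?_ ?_
      · rw [Set.union_comm]; exact hunion
      · intro q hq p hp
        by_contra hpq
        push_neg at hpq
        rcases lt_or_ge q j0 with h2 | h2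
        · exact Set.disjoint_left.mp hdisj (hJint hp hj0 hpq h2.le) hq
        · exact Set.disjoint_left.mp hdisj hj0 (hKint hk0 hq (le_of_lt h) h2)
  · have hset : {x : ℕ | ∀ y ∈ Finset.Ico a b, x < y} = Set.Iio a := by
      ext z
      simp only [Set.mem_setOf_eq, Set.mem_Iio]
      constructor
      · intro h
        exact h a (Finset.mem_Ico.mpr ⟨le_refl a, hab⟩)
      · intro h y hy
        rw [Finset.mem_Ico] at hy
        omega
    rw [hset]
    exact (cut_iff_fclosed f a).mp ha

/-! ### Computability of the pieces -/

lemma primrec_cnt : Primrec₂ cnt := by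
  have h : Primrec fun q : (List ℕ × ℕ) × ℕ × ℕ =>
      if q.2.1 = q.1.2 then q.2.2 + 1 else q.2.2 :=
    Primrec.ite (Primrec.eq.comp (Primrec.fst.comp Primrec.snd) (Primrec.snd.comp Primrec.fst))
      (Primrec.succ.comp (Primrec.snd.comp Primrec.snd))
      (Primrec.snd.comp Primrec.snd)
  exact (Primrec.list_foldr Primrec.fst (Primrec.const 0) h.to₂).of_eq fun p => rfl

lemma primrec_G : Primrec G := by
  have hL : Primrec fun q : (ℕ × List ℕ × List ℕ) × ℕ => q.1.2.1 :=
    Primrec.fst.comp (Primrec.snd.comp Primrec.fst)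
  have hC : Primrec fun q : (ℕ × List ℕ × List ℕ) × ℕ => q.1.2.2 :=
    Primrec.snd.comp (Primrec.snd.comp Primrec.fst)
  have hc : Primrec fun q : (ℕ × List ℕ × List ℕ) × ℕ => q.1.1 :=
    Primrec.fst.comp Primrec.fst
  have h1 : Primrec fun q : (ℕ × List ℕ × List ℕ) × ℕ =>
      decide (q.1.2.1.getD q.2 0 < q.1.1) :=
    (Primrec.nat_lt.comp ((Primrec.list_getD 0).comp hL Primrec.snd) hc).decide
  have h2 : Primrec fun q : (ℕ × List ℕ × List ℕ) × ℕ =>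
      decide (cnt q.1.2.1 q.2 = q.1.2.2.getD q.2 0) :=
    (Primrec.eq.comp (primrec_cnt.comp hL Primrec.snd)
      ((Primrec.list_getD 0).comp hC Primrec.snd)).decide
  have hmap : Primrec fun p : ℕ × List ℕ × List ℕ =>
      (List.range p.1).map fun y =>
        decide (p.2.1.getD y 0 < p.1) && decide (cnt p.2.1 y = p.2.2.getD y 0) :=
    Primrec.list_map (Primrec.list_range.comp Primrec.fst)
      (((Primrec.dom_bool₂ (· && ·)).comp h1 h2).to₂)
  have hh : Primrec fun q : (ℕ × List ℕ × List ℕ) × Bool × Bool => q.2.1 && q.2.2 :=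
    (Primrec.dom_bool₂ (· && ·)).comp (Primrec.fst.comp Primrec.snd)
      (Primrec.snd.comp Primrec.snd)
  exact (Primrec.list_foldr hmap (Primrec.const true) hh.to₂).of_eq fun p => rfl

lemma computable_cutb {f cp : ℕ → ℕ} (hf : Computable f) (hcp : Computable cp) :
    Computable (cutb f cp) := by
  have hmk : ∀ g : ℕ → ℕ, Computable g → Computable fun c => (List.range c).map g := by
    intro g hg
    have h := Computable.nat_rec Computable.id (Computable.const ([] : List ℕ))
      ((Computable.list_concat.comp (Computable.snd.comp Computable.snd)
        (hg.comp (Computable.fst.comp Computable.snd))).to₂)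
    refine h.of_eq fun c => ?_
    induction c with
    | zero => rfl
    | succ c ih =>
        simp only [List.range_succ, List.map_append, List.map_cons, List.map_nil, ← ih]
        rfl
  have hA := hmk f hf
  have hC := hmk _ hcp
  exact (primrec_G.to_comp.comp (Computable.id.pair (hA.pair hC))).of_eq fun c => rfl

end Stmt15Aux

theorem stmt_15 (f : ℕ → ℕ) (hf : Computable f) (hbf : BlockFunction f)
    (hcp : Computable fun x : ℕ => Nat.card (f ⁻¹' {x} : Set ℕ)) :
    ∃ B : ℕ → List ℕ, Computable B ∧ ∀ x : ℕ, x ∈ B x ∧ IsFBlock f (B x).toFinset := by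
  classical
  set cp : ℕ → ℕ := fun x => Nat.card (f ⁻¹' {x} : Set ℕ) with hcpdef
  have hfin := Stmt15Aux.hfin_of_blockFunction hbf
  have hcb : Computable (Stmt15Aux.cutb f cp) := Stmt15Aux.computable_cutb hf hcp
  have hcut_iff : ∀ c, Stmt15Aux.cutb f cp c = true ↔ Stmt15Aux.Cut f c :=
    Stmt15Aux.cutb_iff hfin
  have hex : ∀ x : ℕ, ∃ n, Stmt15Aux.cutb f cp (x + 1 + n) = true := by
    intro x
    obtain ⟨c, hc, hcut⟩ := Stmt15Aux.exists_cut_above hbf x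
    refine ⟨c - (x + 1), ?_⟩
    have h : x + 1 + (c - (x + 1)) = c := by omega
    rw [h, hcut_iff]; exact hcut
  have hq : ∀ x : ℕ, ∃ k, Stmt15Aux.cutb f cp (x - k) = true := fun x =>
    ⟨x, by rw [Nat.sub_self, hcut_iff]; exact Stmt15Aux.cut_zero f⟩
  set nxt : ℕ → ℕ := fun x => x + 1 + Nat.find (hex x) with hnxtdef
  set prv : ℕ → ℕ := fun x => x - Nat.find (hq x) with hprvdef
  have false_of_not : ∀ {b : Bool}, ¬ b = true → (false : Bool) = b := by
    intro b hb
    cases b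
    · rfl
    · exact absurd rfl hb
  have hnxt : Computable nxt := by
    have hp2 : Computable₂ fun (x n : ℕ) => Stmt15Aux.cutb f cp (x + 1 + n) :=
      (hcb.comp ((Primrec.nat_add.comp (Primrec.succ.comp Primrec.fst)
        Primrec.snd).to_comp)).to₂
    have hadd : Computable₂ fun (x n : ℕ) => x + 1 + n :=
      ((Primrec.nat_add.comp (Primrec.succ.comp Primrec.fst) Primrec.snd).to_comp).to₂
    refine ((Partrec.rfind hp2.partrec₂).map hadd).of_eq_tot fun x => ?_
    rw [Part.mem_map_iff]
    refine ⟨Nat.find (hex x), ?_, rfl⟩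
    rw [Nat.mem_rfind]
    constructor
    · exact Part.mem_some_iff.mpr (Nat.find_spec (hex x)).symm
    · intro m hm
      exact Part.mem_some_iff.mpr (false_of_not (Nat.find_min (hex x) hm))
  have hprv : Computable prv := by
    have hp2 : Computable₂ fun (x k : ℕ) => Stmt15Aux.cutb f cp (x - k) :=
      (hcb.comp ((Primrec.nat_sub.comp Primrec.fst Primrec.snd).to_comp)).to₂
    have hsub : Computable₂ fun (x k : ℕ) => x - k :=
      ((Primrec.nat_sub.comp Primrec.fst Primrec.snd).to_comp).to₂
    refine ((Partrec.rfind hp2.partrec₂).map hsub).of_eq_tot fun x => ?_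
    rw [Part.mem_map_iff]
    refine ⟨Nat.find (hq x), ?_, rfl⟩
    rw [Nat.mem_rfind]
    constructor
    · exact Part.mem_some_iff.mpr (Nat.find_spec (hq x)).symm
    · intro m hm
      exact Part.mem_some_iff.mpr (false_of_not (Nat.find_min (hq x) hm))
  set B : ℕ → List ℕ := fun x => (List.range (nxt x - prv x)).map (fun i => prv x + i)
    with hBdef
  have hR : Primrec fun p : ℕ × ℕ => (List.range p.2).map (fun i => p.1 + i) :=
    Primrec.list_map (Primrec.list_range.comp Primrec.snd)
      ((Primrec.nat_add.comp (Primrec.fst.comp Primrec.fst) Primrec.snd).to₂)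
  have hB : Computable B :=
    (hR.to_comp.comp (hprv.pair ((Primrec.nat_sub.to_comp).comp hnxt hprv))).of_eq
      fun x => rfl
  refine ⟨B, hB, fun x => ?_⟩
  have hcut_prv : Stmt15Aux.Cut f (prv x) := (hcut_iff _).mp (Nat.find_spec (hq x))
  have hcut_nxt : Stmt15Aux.Cut f (nxt x) := (hcut_iff _).mp (Nat.find_spec (hex x))
  have hprvle : prv x ≤ x := Nat.sub_le _ _
  have hxlt : x < nxt x := by
    have e2 : nxt x = x + 1 + Nat.find (hex x) := rfl
    omega
  have hno : ∀ c, prv x < c → c < nxt x → ¬ Stmt15Aux.Cut f c := by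
    intro c h1 h2 hcut
    have e1 : prv x = x - Nat.find (hq x) := rfl
    have e2 : nxt x = x + 1 + Nat.find (hex x) := rfl
    rcases le_or_gt c x with hcx | hcx
    · have hk : Stmt15Aux.cutb f cp (x - (x - c)) = true := by
        have h : x - (x - c) = c := by omega
        rw [h, hcut_iff]; exact hcut
      exact Nat.find_min (hq x) (by omega) hk
    · have hk : Stmt15Aux.cutb f cp (x + 1 + (c - (x + 1))) = true := by
        have h : x + 1 + (c - (x + 1)) = c := by omega
        rw [h, hcut_iff]; exact hcut
      exact Nat.find_min (hex x) (by omega) hk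
  have hab : prv x < nxt x := lt_of_le_of_lt hprvle hxlt
  have htf : (B x).toFinset = Finset.Ico (prv x) (nxt x) := by
    ext z
    simp only [hBdef, List.mem_toFinset, List.mem_map, List.mem_range, Finset.mem_Ico]
    constructor
    · rintro ⟨i, hi, rfl⟩; omega
    · intro hz; exact ⟨z - prv x, by omega, by omega⟩
  constructor
  · show x ∈ (List.range (nxt x - prv x)).map (fun i => prv x + i)
    rw [List.mem_map]
    exact ⟨x - prv x, List.mem_range.mpr (by omega), by omega⟩
  · rw [htf]
    exact Stmt15Aux.isFBlock_Ico hab hcut_prv hcut_nxt hno
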